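/- arXiv:2306.05306 — 2 statements merged into one kernel-verified Lean document; each statement's English description precedes it below -/
import Mathlib

section
/- There exists an absolute constant C > 0 such that the following holds. Let G = (V,E) be a non-bipartite finite vertex-transitive graph. Then h_out ≤ C·β_out, where h_out is the outer vertex isoperimetric constant and β_out is the outer vertex bipartiteness constant of G. -/
attribute [local instance] Classical.propDecidable

/-- The outer vertex boundary of a finite set `U`: vertices outside `U` with a neighbor in `U`. -/
noncomputable def outBd {V : Type*} [Fintype V] (Adj : V → V → Prop) (U : Finset V) : Finset V :=
  Finset.univ.filter fun y => y ∉ U ∧ ∃ x ∈ U, Adj x y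

/-- The outer vertex isoperimetric constant: the minimum of `|∂_out U|/|U|` over nonempty sets
`U` with `|U| ≤ |V|/2`. -/
noncomputable def hOut {V : Type*} [Fintype V] (Adj : V → V → Prop) : ℝ :=
  sInf {r : ℝ | ∃ U : Finset V, U.Nonempty ∧ 2 * U.card ≤ Fintype.card V ∧
    r = ((outBd Adj U).card : ℝ) / (U.card : ℝ)}

/-- `I(L)` is the number of vertices of `L` having a neighbor in `L`. -/
noncomputable def II {V : Type*} (Adj : V → V → Prop) (L : Finset V) : ℕ :=
  (L.filter fun x => ∃ y ∈ L, Adj x y).card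

/-- The outer vertex bipartiteness constant `β_out`. -/
noncomputable def betaOut {V : Type*} [Fintype V] (Adj : V → V → Prop) : ℝ :=
  sInf {r : ℝ | ∃ L R : Finset V, Disjoint L R ∧ (L ∪ R).Nonempty ∧
    r = ((II Adj L : ℝ) + (II Adj R : ℝ) + ((outBd Adj (L ∪ R)).card : ℝ)) /
      ((L ∪ R).card : ℝ)}

/-- A graph is bipartite if the vertex set can be partitioned into two parts such that every
edge joins the two parts. -/
def Bipartite {V : Type*} (Adj : V → V → Prop) : Prop :=
  ∃ P : V → Bool, ∀ x y, Adj x y → P x ≠ P y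

/-- A graph is vertex-transitive if its automorphism group acts transitively on vertices. -/
def IsVertexTransitive {V : Type*} (Adj : V → V → Prop) : Prop :=
  ∀ x y : V, ∃ g : Equiv.Perm V, (∀ a b : V, Adj (g a) (g b) ↔ Adj a b) ∧ g x = y

section Aux

variable {V : Type} [Fintype V] (Adj : V → V → Prop)

/-- The finset of all automorphisms. -/
noncomputable def Gam : Finset (Equiv.Perm V) :=
  Finset.univ.filter fun g => ∀ a b, Adj (g a) (g b) ↔ Adj a b

variable {Adj}

lemma mem_Gam {g : Equiv.Perm V} : g ∈ Gam Adj ↔ ∀ a b, Adj (g a) (g b) ↔ Adj a b := by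
  simp [Gam]

lemma one_mem_Gam : (1 : Equiv.Perm V) ∈ Gam Adj := by simp [mem_Gam]

lemma inv_mem_Gam {g : Equiv.Perm V} (hg : g ∈ Gam Adj) : g⁻¹ ∈ Gam Adj := by
  rw [mem_Gam] at hg ⊢
  intro a b
  conv_rhs => rw [show a = g (g⁻¹ a) by simp, show b = g (g⁻¹ b) by simp]
  rw [hg]

lemma mul_mem_Gam {g h : Equiv.Perm V} (hg : g ∈ Gam Adj) (hh : h ∈ Gam Adj) :
    g * h ∈ Gam Adj := by
  rw [mem_Gam] at hg hh ⊢
  intro a b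
  simp only [Equiv.Perm.mul_apply]
  rw [hg, hh]

lemma perm_pull_card (f : Equiv.Perm V) (A : Finset V) :
    (Finset.univ.filter fun u => f u ∈ A).card = A.card := by
  apply Finset.card_bij' (fun u _ => f u) (fun a _ => f⁻¹ a)
  · intro u hu; simpa using (Finset.mem_filter.mp hu).2
  · intro a ha; simp [ha]
  · intro u hu; simp
  · intro a ha; simp

variable (htrans : IsVertexTransitive Adj)
include htrans

lemma K1 (u v : V) :
    ((Gam Adj).filter fun g => g u = v).card * Fintype.card V = (Gam Adj).card := by
  have hconst : ∀ w w' : V,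
      ((Gam Adj).filter fun g => g u = w).card = ((Gam Adj).filter fun g => g u = w').card := by
    intro w w'
    obtain ⟨e, he, hew⟩ := htrans w w'
    have heG : e ∈ Gam Adj := mem_Gam.mpr he
    apply Finset.card_bij' (fun g _ => e * g) (fun g _ => e⁻¹ * g)
    · intro g hg
      rw [Finset.mem_filter] at hg ⊢
      exact ⟨mul_mem_Gam heG hg.1, by simp [hg.2, hew]⟩
    · intro g hg
      rw [Finset.mem_filter] at hg ⊢
      refine ⟨mul_mem_Gam (inv_mem_Gam heG) hg.1, ?_⟩
      have : e ((e⁻¹ * g) u) = e (e⁻¹ (g u)) := rfl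
      simp only [Equiv.Perm.mul_apply]
      rw [show g u = w' from hg.2, ← hew]
      simp
    · intro g _; simp [mul_assoc]
    · intro g _; simp [mul_assoc]
  have hsum : (Gam Adj).card =
      ∑ w : V, ((Gam Adj).filter fun g => g u = w).card :=
    Finset.card_eq_sum_card_fiberwise (fun g _ => Finset.mem_univ (g u))
  rw [hsum]
  rw [Finset.sum_congr rfl (fun w _ => hconst w v)]
  simp [Finset.sum_const, mul_comm]

lemma K2 (A : Finset V) (v : V) :
    ((Gam Adj).filter fun g => g⁻¹ v ∈ A).card * Fintype.card V = A.card * (Gam Adj).card := by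
  have hfib : ((Gam Adj).filter fun g => g⁻¹ v ∈ A).card =
      ∑ u ∈ A, (((Gam Adj).filter fun g => g⁻¹ v ∈ A).filter fun g => g⁻¹ v = u).card :=
    Finset.card_eq_sum_card_fiberwise (fun g hg => (Finset.mem_filter.mp hg).2)
  have hfib2 : ∀ u ∈ A, (((Gam Adj).filter fun g => g⁻¹ v ∈ A).filter fun g => g⁻¹ v = u).card
      = ((Gam Adj).filter fun g => g u = v).card := by
    intro u hu
    congr 1
    ext g
    simp only [Finset.mem_filter]
    constructor
    · rintro ⟨⟨hg, -⟩, h2⟩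
      exact ⟨hg, by rw [← h2]; simp⟩
    · rintro ⟨hg, h2⟩
      have : g⁻¹ v = u := by rw [← h2]; simp
      exact ⟨⟨hg, this ▸ hu⟩, this⟩
  rw [hfib, Finset.sum_congr rfl hfib2, Finset.sum_mul]
  rw [Finset.sum_congr rfl (fun u _ => K1 htrans u v)]
  simp [Finset.sum_const, mul_comm]

end Aux
section Crit

variable {V : Type} [Fintype V] (Adj : V → V → Prop) (σ : V → ℤ)

noncomputable def aF (f : Equiv.Perm V) : ℕ :=
  (Finset.univ.filter fun u => σ (f u) = σ u ∧ σ u ≠ 0).card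

noncomputable def mF (f : Equiv.Perm V) : ℕ :=
  (Finset.univ.filter fun u => σ (f u) = -σ u ∧ σ u ≠ 0).card

noncomputable def epsP (f : Equiv.Perm V) : ℤ :=
  if 100 * mF σ f ≤ Fintype.card V then 1 else -1

noncomputable def DsetP (f : Equiv.Perm V) : Finset V :=
  Finset.univ.filter fun u => σ (f u) = epsP σ f * σ u ∧ σ u ≠ 0

noncomputable def EsetP (f : Equiv.Perm V) : Finset V :=
  Finset.univ \ DsetP σ f

noncomputable def TsetP : Finset V := Finset.univ.filter fun v => σ v = 0

variable {σ}

lemma epsP_cases (f : Equiv.Perm V) : epsP σ f = 1 ∨ epsP σ f = -1 := by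
  unfold epsP; split_ifs <;> simp

lemma epsP_ne_zero (f : Equiv.Perm V) : epsP σ f ≠ 0 := by
  rcases epsP_cases (σ := σ) f with h | h <;> rw [h] <;> decide

lemma epsP_sq (f : Equiv.Perm V) : epsP σ f * epsP σ f = 1 := by
  rcases epsP_cases (σ := σ) f with h | h <;> rw [h] <;> decide

variable (hval : ∀ v, σ v = 1 ∨ σ v = -1 ∨ σ v = 0)

section
include hval

lemma am_lower (f : Equiv.Perm V) :
    Fintype.card V ≤ aF σ f + mF σ f + 2 * (TsetP σ).card := by
  classical
  set Z := Finset.univ.filter fun u : V => σ u = 0 ∨ σ (f u) = 0 with hZ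
  have hcover : (Finset.univ : Finset V) ⊆
      (Finset.univ.filter fun u => σ (f u) = σ u ∧ σ u ≠ 0) ∪
      ((Finset.univ.filter fun u => σ (f u) = -σ u ∧ σ u ≠ 0) ∪ Z) := by
    intro u _
    simp only [hZ, Finset.mem_union, Finset.mem_filter, Finset.mem_univ, true_and]
    by_cases h0 : σ u = 0
    · exact Or.inr (Or.inr (Or.inl h0))
    by_cases h0' : σ (f u) = 0
    · exact Or.inr (Or.inr (Or.inr h0'))
    rcases hval u with h | h | h
    · rcases hval (f u) with h' | h' | h'
      · exact Or.inl ⟨by simp [h, h'], h0⟩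
      · exact Or.inr (Or.inl ⟨by simp [h, h'], h0⟩)
      · exact absurd h' h0'
    · rcases hval (f u) with h' | h' | h'
      · exact Or.inr (Or.inl ⟨by simp [h, h'], h0⟩)
      · exact Or.inl ⟨by simp [h, h'], h0⟩
      · exact absurd h' h0'
    · exact absurd h h0
  have hZcard : Z.card ≤ 2 * (TsetP σ).card := by
    have hsub : Z ⊆ (Finset.univ.filter fun u : V => σ u = 0) ∪
        (Finset.univ.filter fun u : V => σ (f u) = 0) := by
      intro u hu
      simp only [hZ, Finset.mem_filter, Finset.mem_univ, true_and] at hu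
      simp only [Finset.mem_union, Finset.mem_filter, Finset.mem_univ, true_and]
      exact hu
    have h2 : (Finset.univ.filter fun u : V => σ (f u) = 0).card = (TsetP σ).card := by
      rw [show (Finset.univ.filter fun u : V => σ (f u) = 0)
          = (Finset.univ.filter fun u : V => f u ∈ TsetP σ) by
        apply Finset.filter_congr; intro u _; simp [TsetP]]
      exact perm_pull_card f (TsetP σ)
    have h1 : (Finset.univ.filter fun u : V => σ u = 0).card = (TsetP σ).card := rfl
    have := Finset.card_le_card hsub
    have := Finset.card_union_le (Finset.univ.filter fun u : V => σ u = 0)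
      (Finset.univ.filter fun u : V => σ (f u) = 0)
    omega
  have hstep1 := Finset.card_le_card hcover
  have hstep2 := Finset.card_union_le
    (Finset.univ.filter fun u => σ (f u) = σ u ∧ σ u ≠ 0)
    ((Finset.univ.filter fun u => σ (f u) = -σ u ∧ σ u ≠ 0) ∪ Z)
  have hstep3 := Finset.card_union_le
    (Finset.univ.filter fun u => σ (f u) = -σ u ∧ σ u ≠ 0) Z
  have haF : aF σ f = (Finset.univ.filter fun u => σ (f u) = σ u ∧ σ u ≠ 0).card := rfl
  have hmF : mF σ f = (Finset.univ.filter fun u => σ (f u) = -σ u ∧ σ u ≠ 0).card := rfl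
  have hu : (Finset.univ : Finset V).card = Fintype.card V := Finset.card_univ
  omega

lemma Dcard_lower {f : Equiv.Perm V}
    (hT : 1000 * (TsetP σ).card ≤ 11 * Fintype.card V)
    (hdich : 100 * aF σ f ≤ Fintype.card V ∨ 100 * mF σ f ≤ Fintype.card V) :
    1000 * Fintype.card V ≤ 1000 * (DsetP σ f).card + 32 * Fintype.card V := by
  have ham := am_lower hval f
  by_cases h : 100 * mF σ f ≤ Fintype.card V
  · have hD : (DsetP σ f).card = aF σ f := by
      unfold DsetP aF
      congr 1
      apply Finset.filter_congr
      intro u _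
      rw [show epsP σ f = 1 by unfold epsP; simp [h]]
      simp
    rw [hD]; omega
  · have ha : 100 * aF σ f ≤ Fintype.card V := hdich.resolve_right h
    have hD : (DsetP σ f).card = mF σ f := by
      unfold DsetP mF
      congr 1
      apply Finset.filter_congr
      intro u _
      rw [show epsP σ f = -1 by unfold epsP; simp [h]]
      simp
    rw [hD]; omega

lemma Ecard_upper {f : Equiv.Perm V}
    (hT : 1000 * (TsetP σ).card ≤ 11 * Fintype.card V)
    (hdich : 100 * aF σ f ≤ Fintype.card V ∨ 100 * mF σ f ≤ Fintype.card V) :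
    1000 * (EsetP σ f).card ≤ 32 * Fintype.card V := by
  have h1 := Dcard_lower hval hT hdich
  have h2 : (EsetP σ f).card = Fintype.card V - (DsetP σ f).card := by
    unfold EsetP
    rw [Finset.card_sdiff_of_subset (Finset.subset_univ _), Finset.card_univ]
  have h3 : (DsetP σ f).card ≤ Fintype.card V := Finset.card_le_univ _
  omega

end

end Crit
section Crit2

variable {V : Type} [Fintype V] {Adj : V → V → Prop} {σ : V → ℤ}
variable (hval : ∀ v, σ v = 1 ∨ σ v = -1 ∨ σ v = 0)
variable (hT : 1000 * (TsetP σ).card ≤ 11 * Fintype.card V)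
variable (hdichG : ∀ g ∈ Gam Adj,
  100 * aF σ g ≤ Fintype.card V ∨ 100 * mF σ g ≤ Fintype.card V)
variable (hn : 1 ≤ Fintype.card V)

lemma epsP_one : epsP σ (1 : Equiv.Perm V) = 1 := by
  have hm : mF σ (1 : Equiv.Perm V) = 0 := by
    unfold mF
    rw [Finset.card_eq_zero, Finset.filter_eq_empty_iff]
    intro u _
    simp only [Equiv.Perm.one_apply]
    rintro ⟨h1, h2⟩
    omega
  unfold epsP
  rw [hm]
  simp

include hval hT hdichG hn

lemma multP {f g : Equiv.Perm V} (hf : f ∈ Gam Adj) (hg : g ∈ Gam Adj) :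
    epsP σ (g * f) = epsP σ g * epsP σ f := by
  by_contra hne
  have hEf := Ecard_upper hval hT (hdichG f hf)
  have hEg := Ecard_upper hval hT (hdichG g hg)
  have hEgf := Ecard_upper hval hT (hdichG (g * f) (mul_mem_Gam hg hf))
  set Good := Finset.univ \ (EsetP σ f ∪ (Finset.univ.filter fun u => f u ∈ EsetP σ g))
    with hGood
  have hGc : Fintype.card V ≤ Good.card + ((EsetP σ f).card + (EsetP σ g).card) := by
    have h1 : Good.card = Fintype.card V
        - (EsetP σ f ∪ (Finset.univ.filter fun u => f u ∈ EsetP σ g)).card := by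
      rw [hGood, Finset.card_sdiff_of_subset (Finset.subset_univ _), Finset.card_univ]
    have h2 := Finset.card_union_le (EsetP σ f)
      (Finset.univ.filter fun u => f u ∈ EsetP σ g)
    have h3 : (Finset.univ.filter fun u => f u ∈ EsetP σ g).card = (EsetP σ g).card :=
      perm_pull_card f (EsetP σ g)
    have h4 : (EsetP σ f ∪ (Finset.univ.filter fun u => f u ∈ EsetP σ g)).card
        ≤ Fintype.card V := Finset.card_le_univ _
    omega
  have hsub : Good ⊆ EsetP σ (g * f) := by
    intro u hu
    rw [hGood, Finset.mem_sdiff, Finset.mem_union] at hu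
    push_neg at hu
    obtain ⟨-, hu1, hu2⟩ := hu
    have hDf : u ∈ DsetP σ f := by
      have : u ∈ Finset.univ \ EsetP σ f := Finset.mem_sdiff.mpr ⟨Finset.mem_univ _, hu1⟩
      unfold EsetP at this
      rw [Finset.sdiff_sdiff_self_left] at this
      exact (Finset.mem_inter.mp this).2
    have hDg : f u ∈ DsetP σ g := by
      have h' : ¬ f u ∈ EsetP σ g := fun hmem =>
        hu2 (Finset.mem_filter.mpr ⟨Finset.mem_univ u, hmem⟩)
      have : f u ∈ Finset.univ \ EsetP σ g := Finset.mem_sdiff.mpr ⟨Finset.mem_univ _, h'⟩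
      unfold EsetP at this
      rw [Finset.sdiff_sdiff_self_left] at this
      exact (Finset.mem_inter.mp this).2
    unfold DsetP at hDf hDg
    rw [Finset.mem_filter] at hDf hDg
    obtain ⟨-, hf1, hf2⟩ := hDf
    obtain ⟨-, hg1, -⟩ := hDg
    unfold EsetP
    rw [Finset.mem_sdiff]
    refine ⟨Finset.mem_univ _, fun hmem => ?_⟩
    unfold DsetP at hmem
    rw [Finset.mem_filter] at hmem
    obtain ⟨-, hm1, -⟩ := hmem
    rw [Equiv.Perm.mul_apply, hg1, hf1] at hm1
    have key : (epsP σ g * epsP σ f) * σ u = epsP σ (g * f) * σ u := by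
      rw [← hm1]; ring
    exact hne (mul_right_cancel₀ hf2 key).symm
  have hcard := Finset.card_le_card hsub
  omega

lemma epsP_inv {f : Equiv.Perm V} (hf : f ∈ Gam Adj) : epsP σ f⁻¹ = epsP σ f := by
  have h1 : epsP σ (f * f⁻¹) = epsP σ f * epsP σ f⁻¹ :=
    multP hval hT hdichG hn (inv_mem_Gam hf) hf
  rw [mul_inv_cancel, epsP_one] at h1
  rcases epsP_cases (σ := σ) f with h | h <;>
    rcases epsP_cases (σ := σ) f⁻¹ with h' | h' <;>
      rw [h, h'] at h1 ⊢ <;> omega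

end Crit2
section Crit3

variable {V : Type} [Fintype V] (Adj : V → V → Prop) (σ : V → ℤ)

noncomputable def pcnt (v : V) : ℕ :=
  ((Gam Adj).filter fun g => epsP σ g * σ (g⁻¹ v) = 1).card

noncomputable def qcnt (v : V) : ℕ :=
  ((Gam Adj).filter fun g => epsP σ g * σ (g⁻¹ v) = -1).card

noncomputable def zcnt (v : V) : ℕ :=
  ((Gam Adj).filter fun g => σ (g⁻¹ v) = 0).card

noncomputable def Mval (v : V) : ℤ :=
  if qcnt Adj σ v < pcnt Adj σ v then 1 else -1

noncomputable def goodSet (v : V) : Finset (Equiv.Perm V) :=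
  (Gam Adj).filter fun g => epsP σ g * σ (g⁻¹ v) = Mval Adj σ v

variable {Adj σ}

lemma Mval_cases (v : V) : Mval Adj σ v = 1 ∨ Mval Adj σ v = -1 := by
  unfold Mval; split_ifs <;> simp

lemma pqz_total (hval : ∀ v, σ v = 1 ∨ σ v = -1 ∨ σ v = 0) (v : V) :
    pcnt Adj σ v + qcnt Adj σ v + zcnt Adj σ v = (Gam Adj).card := by
  classical
  have h1 := Finset.card_filter_add_card_filter_not
    (s := Gam Adj) (p := fun g => epsP σ g * σ (g⁻¹ v) = 1)
  have h2 := Finset.card_filter_add_card_filter_not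
    (s := (Gam Adj).filter fun g => ¬ (epsP σ g * σ (g⁻¹ v) = 1))
    (p := fun g => epsP σ g * σ (g⁻¹ v) = -1)
  have e1 : ((Gam Adj).filter fun g => ¬ (epsP σ g * σ (g⁻¹ v) = 1)).filter
      (fun g => epsP σ g * σ (g⁻¹ v) = -1)
      = (Gam Adj).filter fun g => epsP σ g * σ (g⁻¹ v) = -1 := by
    rw [Finset.filter_filter]
    apply Finset.filter_congr
    intro g _
    constructor
    · rintro ⟨-, h⟩; exact h
    · intro h; exact ⟨by rw [h]; decide, h⟩
  have e2 : ((Gam Adj).filter fun g => ¬ (epsP σ g * σ (g⁻¹ v) = 1)).filter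
      (fun g => ¬ (epsP σ g * σ (g⁻¹ v) = -1))
      = (Gam Adj).filter fun g => σ (g⁻¹ v) = 0 := by
    rw [Finset.filter_filter]
    apply Finset.filter_congr
    intro g _
    constructor
    · rintro ⟨hne1, hnem1⟩
      rcases epsP_cases (σ := σ) g with he | he <;>
        rcases hval (g⁻¹ v) with hs | hs | hs <;>
          rw [he, hs] at hne1 hnem1 <;> first
            | exact hs
            | (exfalso; revert hne1 hnem1; decide)
    · intro h0
      rw [h0]
      constructor <;> simp [mul_comm] <;> exact epsP_ne_zero g
  unfold pcnt qcnt zcnt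
  rw [← e1, ← e2] at *
  omega

lemma zn_count (htrans : IsVertexTransitive Adj) (v : V) :
    zcnt Adj σ v * Fintype.card V = (TsetP σ).card * (Gam Adj).card := by
  have := K2 htrans (TsetP σ) v
  rw [show ((Gam Adj).filter fun g => g⁻¹ v ∈ TsetP σ)
      = (Gam Adj).filter fun g => σ (g⁻¹ v) = 0 by
    apply Finset.filter_congr; intro g _; simp [TsetP]] at this
  exact this

end Crit3
section Crit4

variable {V : Type} [Fintype V] {Adj : V → V → Prop} {σ : V → ℤ}
variable (hval : ∀ v, σ v = 1 ∨ σ v = -1 ∨ σ v = 0)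
variable (hT : 1000 * (TsetP σ).card ≤ 11 * Fintype.card V)
variable (hdichG : ∀ g ∈ Gam Adj,
  100 * aF σ g ≤ Fintype.card V ∨ 100 * mF σ g ≤ Fintype.card V)
variable (hn : 1 ≤ Fintype.card V)
variable (htrans : IsVertexTransitive Adj)

include hval hT hdichG hn in
lemma pair_agree {g h : Equiv.Perm V} (hg : g ∈ Gam Adj) (hh : h ∈ Gam Adj) (v : V)
    (hnot : g⁻¹ v ∉ EsetP σ (h⁻¹ * g)) :
    epsP σ g * σ (g⁻¹ v) = epsP σ h * σ (h⁻¹ v) ∧ σ (g⁻¹ v) ≠ 0 := by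
  have hfG : h⁻¹ * g ∈ Gam Adj := mul_mem_Gam (inv_mem_Gam hh) hg
  have hD : g⁻¹ v ∈ DsetP σ (h⁻¹ * g) := by
    have : g⁻¹ v ∈ Finset.univ \ EsetP σ (h⁻¹ * g) :=
      Finset.mem_sdiff.mpr ⟨Finset.mem_univ _, hnot⟩
    unfold EsetP at this
    rw [Finset.sdiff_sdiff_self_left] at this
    exact (Finset.mem_inter.mp this).2
  unfold DsetP at hD
  rw [Finset.mem_filter] at hD
  obtain ⟨-, hD1, hD2⟩ := hD
  have happ : (h⁻¹ * g) (g⁻¹ v) = h⁻¹ v := by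
    simp [Equiv.Perm.mul_apply]
  rw [happ] at hD1
  have hmul : epsP σ (h⁻¹ * g) = epsP σ h * epsP σ g := by
    rw [multP hval hT hdichG hn hg (inv_mem_Gam hh), epsP_inv hval hT hdichG hn hh]
  refine ⟨?_, hD2⟩
  rw [hD1, hmul]
  have h2 : epsP σ h * epsP σ h = 1 := epsP_sq h
  linear_combination (-(epsP σ g * σ (g⁻¹ v))) * h2

include hval hT hdichG hn htrans in
lemma pq_bound (v : V) :
    2000 * (pcnt Adj σ v * qcnt Adj σ v) ≤ 32 * ((Gam Adj).card * (Gam Adj).card) := by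
  classical
  set G := Gam Adj with hG
  set BP := (G ×ˢ G).filter (fun p : Equiv.Perm V × Equiv.Perm V =>
    p.1⁻¹ v ∈ EsetP σ (p.2⁻¹ * p.1)) with hBP
  -- lower bound on BP
  have hsub : ((G.filter fun g => epsP σ g * σ (g⁻¹ v) = 1) ×ˢ
      (G.filter fun g => epsP σ g * σ (g⁻¹ v) = -1)) ∪
      ((G.filter fun g => epsP σ g * σ (g⁻¹ v) = -1) ×ˢ
      (G.filter fun g => epsP σ g * σ (g⁻¹ v) = 1)) ⊆ BP := by
    intro p hp
    rw [Finset.mem_union, Finset.mem_product, Finset.mem_product] at hp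
    rw [hBP, Finset.mem_filter, Finset.mem_product]
    rcases hp with ⟨h1, h2⟩ | ⟨h1, h2⟩ <;>
      rw [Finset.mem_filter] at h1 h2 <;>
        refine ⟨⟨h1.1, h2.1⟩, ?_⟩ <;>
          (by_contra hnot;
           obtain ⟨heq, -⟩ := pair_agree hval hT hdichG hn h1.1 h2.1 v hnot;
           rw [h1.2, h2.2] at heq; exact absurd heq (by decide))
  have hdisj : Disjoint
      ((G.filter fun g => epsP σ g * σ (g⁻¹ v) = 1) ×ˢ
      (G.filter fun g => epsP σ g * σ (g⁻¹ v) = -1))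
      ((G.filter fun g => epsP σ g * σ (g⁻¹ v) = -1) ×ˢ
      (G.filter fun g => epsP σ g * σ (g⁻¹ v) = 1)) := by
    rw [Finset.disjoint_left]
    intro p hp hp'
    rw [Finset.mem_product, Finset.mem_filter, Finset.mem_filter] at hp hp'
    have := hp.1.2
    rw [hp'.1.2] at this
    exact absurd this (by decide)
  have hlow : 2 * (pcnt Adj σ v * qcnt Adj σ v) ≤ BP.card := by
    have := Finset.card_le_card hsub
    rw [Finset.card_union_of_disjoint hdisj, Finset.card_product, Finset.card_product] at this
    unfold pcnt qcnt
    rw [← hG]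
    rw [Nat.mul_comm ((G.filter fun g => epsP σ g * σ (g⁻¹ v) = -1)).card
      ((G.filter fun g => epsP σ g * σ (g⁻¹ v) = 1)).card] at this
    omega
  -- upper bound on BP
  have hup : 1000 * BP.card * Fintype.card V ≤ 32 * (G.card * G.card) * Fintype.card V := by
    have hfib : BP.card = ∑ f ∈ G, (BP.filter fun p => p.2⁻¹ * p.1 = f).card := by
      apply Finset.card_eq_sum_card_fiberwise
      intro p hp
      rw [Finset.mem_coe, hBP, Finset.mem_filter, Finset.mem_product] at hp
      exact mul_mem_Gam (inv_mem_Gam hp.1.2) hp.1.1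
    have hfibcard : ∀ f ∈ G, (BP.filter fun p => p.2⁻¹ * p.1 = f).card
        = (G.filter fun g => g⁻¹ v ∈ EsetP σ f).card := by
      intro f hf
      apply Finset.card_bij' (fun p _ => p.1) (fun g _ => (g, g * f⁻¹))
      · intro p hp
        rw [Finset.mem_filter, hBP, Finset.mem_filter, Finset.mem_product] at hp
        obtain ⟨⟨⟨hp1, -⟩, hmem⟩, heq⟩ := hp
        rw [Finset.mem_filter]
        exact ⟨hp1, by rw [← heq]; exact hmem⟩
      · intro g hg
        rw [Finset.mem_filter] at hg
        rw [Finset.mem_filter, hBP, Finset.mem_filter, Finset.mem_product]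
        have hqe : (g * f⁻¹)⁻¹ * g = f := by group
        refine ⟨⟨⟨hg.1, ?_⟩, ?_⟩, hqe⟩
        · exact mul_mem_Gam hg.1 (inv_mem_Gam (mem_Gam.mpr (mem_Gam.mp hf)))
        · simpa [hqe] using hg.2
      · intro p hp
        rw [Finset.mem_filter] at hp
        have h2 : p.2 = p.1 * f⁻¹ := by
          rw [← hp.2]
          group
        exact Prod.ext rfl h2.symm
      · intro g _; rfl
    have hkey : ∀ f ∈ G, 1000 * ((G.filter fun g => g⁻¹ v ∈ EsetP σ f).card
        * Fintype.card V) ≤ 32 * Fintype.card V * G.card := by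
      intro f hf
      have h1 := K2 htrans (EsetP σ f) v
      have h2 := Ecard_upper hval hT (hdichG f hf)
      rw [← hG] at h1
      calc 1000 * ((G.filter fun g => g⁻¹ v ∈ EsetP σ f).card * Fintype.card V)
          = 1000 * (EsetP σ f).card * G.card := by rw [h1]; ring
        _ ≤ 32 * Fintype.card V * G.card := by
            exact Nat.mul_le_mul_right _ h2
    calc 1000 * BP.card * Fintype.card V
        = ∑ f ∈ G, 1000 * ((BP.filter fun p => p.2⁻¹ * p.1 = f).card * Fintype.card V) := by
          rw [hfib, Finset.mul_sum, Finset.sum_mul]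
          apply Finset.sum_congr rfl; intro f _; ring
      _ ≤ ∑ f ∈ G, 32 * Fintype.card V * G.card := by
          apply Finset.sum_le_sum
          intro f hf
          rw [hfibcard f hf]
          exact hkey f hf
      _ = 32 * (G.card * G.card) * Fintype.card V := by
          rw [Finset.sum_const, smul_eq_mul]; ring
  have hup' : 1000 * BP.card ≤ 32 * (G.card * G.card) :=
    Nat.le_of_mul_le_mul_right (by simpa [Nat.mul_assoc] using hup) (by omega)
  omega

end Crit4
section Crit5

lemma minority_bound (p q z G : ℕ) (h1 : p + q + z = G) (hz : 1000 * z ≤ 11 * G)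
    (hpq : 2000 * (p * q) ≤ 32 * (G * G)) (hG : 1 ≤ G) (hle : q ≤ p) :
    949 * G ≤ 1000 * p := by
  have hq40 : 1000 * q ≤ 40 * G := by
    by_contra h'
    push_neg at h'
    have hQ : (40 : ℝ) * G < 1000 * q := by exact_mod_cast h'
    have hle' : (q : ℝ) ≤ p := by exact_mod_cast hle
    have hP : (40 : ℝ) * G < 1000 * p := by linarith
    have h1' : (p : ℝ) + q + z = G := by exact_mod_cast h1
    have hz' : 1000 * (z : ℝ) ≤ 11 * G := by exact_mod_cast hz
    have hpq' : 2000 * ((p : ℝ) * q) ≤ 32 * ((G : ℝ) * G) := by exact_mod_cast hpq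
    have hzn : (0 : ℝ) ≤ z := by positivity
    nlinarith [mul_pos (sub_pos.mpr hQ) (sub_pos.mpr hP)]
  omega

variable {V : Type} [Fintype V] {Adj : V → V → Prop} {σ : V → ℤ}
variable (hval : ∀ v, σ v = 1 ∨ σ v = -1 ∨ σ v = 0)
variable (hT : 1000 * (TsetP σ).card ≤ 11 * Fintype.card V)
variable (hdichG : ∀ g ∈ Gam Adj,
  100 * aF σ g ≤ Fintype.card V ∨ 100 * mF σ g ≤ Fintype.card V)
variable (hn : 1 ≤ Fintype.card V)
variable (htrans : IsVertexTransitive Adj)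

include hval hT hdichG hn htrans in
lemma good_card (v : V) :
    949 * (Gam Adj).card ≤ 1000 * (goodSet Adj σ v).card := by
  have h1 := pqz_total (Adj := Adj) hval v
  have hzc := zn_count (σ := σ) htrans v
  have hz : 1000 * zcnt Adj σ v ≤ 11 * (Gam Adj).card := by
    have hmul : (1000 * zcnt Adj σ v) * Fintype.card V
        ≤ (11 * (Gam Adj).card) * Fintype.card V := by
      calc (1000 * zcnt Adj σ v) * Fintype.card V
          = 1000 * (zcnt Adj σ v * Fintype.card V) := by ring
        _ = 1000 * ((TsetP σ).card * (Gam Adj).card) := by rw [hzc]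
        _ = (1000 * (TsetP σ).card) * (Gam Adj).card := by ring
        _ ≤ (11 * Fintype.card V) * (Gam Adj).card := Nat.mul_le_mul_right _ hT
        _ = (11 * (Gam Adj).card) * Fintype.card V := by ring
    exact Nat.le_of_mul_le_mul_right hmul (by omega)
  have hpq := pq_bound hval hT hdichG hn htrans (σ := σ) v
  have hG1 : 1 ≤ (Gam Adj).card := Finset.card_pos.mpr ⟨1, one_mem_Gam⟩
  by_cases hlt : qcnt Adj σ v < pcnt Adj σ v
  · have hM : Mval Adj σ v = 1 := by unfold Mval; rw [if_pos hlt]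
    have hgood : (goodSet Adj σ v).card = pcnt Adj σ v := by
      unfold goodSet pcnt
      rw [hM]
    rw [hgood]
    exact minority_bound _ _ _ _ h1 hz hpq hG1 (le_of_lt hlt)
  · have hM : Mval Adj σ v = -1 := by unfold Mval; rw [if_neg hlt]
    have hgood : (goodSet Adj σ v).card = qcnt Adj σ v := by
      unfold goodSet qcnt
      rw [hM]
    rw [hgood]
    refine minority_bound _ _ _ _ (by omega : qcnt Adj σ v + pcnt Adj σ v + zcnt Adj σ v
      = (Gam Adj).card) hz (by rw [Nat.mul_comm (qcnt Adj σ v)]; exact hpq) hG1 (by omega)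

include hval hT hdichG hn htrans in
lemma crit_bipartite
    (hprop : ∀ v w, Adj v w → σ v ≠ 0 → σ w ≠ 0 → σ w = -σ v) :
    Bipartite Adj := by
  classical
  refine ⟨fun v => decide (qcnt Adj σ v < pcnt Adj σ v), ?_⟩
  intro x y hxy hPeq
  simp only [decide_eq_decide] at hPeq
  have hgx := good_card hval hT hdichG hn htrans (σ := σ) x
  have hgy := good_card hval hT hdichG hn htrans (σ := σ) y
  have hG1 : 1 ≤ (Gam Adj).card := Finset.card_pos.mpr ⟨1, one_mem_Gam⟩
  have hiu := Finset.card_inter_add_card_union (goodSet Adj σ x) (goodSet Adj σ y)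
  have hun : (goodSet Adj σ x ∪ goodSet Adj σ y).card ≤ (Gam Adj).card :=
    Finset.card_le_card (Finset.union_subset (Finset.filter_subset _ _)
      (Finset.filter_subset _ _))
  have hpos : 0 < (goodSet Adj σ x ∩ goodSet Adj σ y).card := by omega
  obtain ⟨g, hgmem⟩ := Finset.card_pos.mp hpos
  rw [Finset.mem_inter] at hgmem
  obtain ⟨hgx', hgy'⟩ := hgmem
  unfold goodSet at hgx' hgy'
  rw [Finset.mem_filter] at hgx' hgy'
  obtain ⟨hgG, hMx⟩ := hgx'
  obtain ⟨-, hMy⟩ := hgy'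
  have hx0 : σ (g⁻¹ x) ≠ 0 := by
    intro h0
    rw [h0, mul_zero] at hMx
    rcases Mval_cases (Adj := Adj) (σ := σ) x with h | h <;> rw [← hMx] at h <;> omega
  have hy0 : σ (g⁻¹ y) ≠ 0 := by
    intro h0
    rw [h0, mul_zero] at hMy
    rcases Mval_cases (Adj := Adj) (σ := σ) y with h | h <;> rw [← hMy] at h <;> omega
  have hadj : Adj (g⁻¹ x) (g⁻¹ y) := by
    have := mem_Gam.mp (inv_mem_Gam hgG)
    exact (this x y).mpr hxy
  have hflip : σ (g⁻¹ y) = -σ (g⁻¹ x) := hprop _ _ hadj hx0 hy0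
  have hMxy : Mval Adj σ y = - Mval Adj σ x := by
    rw [← hMx, ← hMy, hflip]
    ring
  have hMeq : Mval Adj σ x = Mval Adj σ y := by
    unfold Mval
    by_cases h : qcnt Adj σ x < pcnt Adj σ x
    · rw [if_pos h, if_pos (hPeq.mp h)]
    · rw [if_neg h, if_neg (fun h' => h (hPeq.mpr h'))]
  rcases Mval_cases (Adj := Adj) (σ := σ) y with h | h <;>
    rw [hMeq, h] at hMxy <;> omega
end Crit5
section Outer

variable {V : Type} [Fintype V] {Adj : V → V → Prop}

lemma hOut_le_ratio (U : Finset V) (hne : U.Nonempty)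
    (hcard : 2 * U.card ≤ Fintype.card V) :
    hOut Adj ≤ ((outBd Adj U).card : ℝ) / (U.card : ℝ) := by
  apply csInf_le
  · refine ⟨0, fun r hr => ?_⟩
    obtain ⟨U', h1, h2, rfl⟩ := hr
    positivity
  · exact ⟨U, hne, hcard, rfl⟩

lemma hOut_le_two (hn2 : 2 ≤ Fintype.card V) : hOut Adj ≤ 2 := by
  obtain ⟨U, hUs, hUcard⟩ := Finset.exists_subset_card_eq (s := (Finset.univ : Finset V))
    (n := Fintype.card V / 2) (by simp [Nat.div_le_iff_le_mul_add_pred]; omega)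
  have hUne : U.Nonempty := Finset.card_pos.mp (by omega)
  have h2U : 2 * U.card ≤ Fintype.card V := by omega
  have hbd : (outBd Adj U).card ≤ Fintype.card V - U.card := by
    have hsub : outBd Adj U ⊆ Finset.univ \ U := by
      intro y hy
      rw [outBd, Finset.mem_filter] at hy
      exact Finset.mem_sdiff.mpr ⟨Finset.mem_univ _, hy.2.1⟩
    calc (outBd Adj U).card ≤ (Finset.univ \ U).card := Finset.card_le_card hsub
      _ = Fintype.card V - U.card := by
          rw [Finset.card_sdiff_of_subset (Finset.subset_univ _), Finset.card_univ]
  refine le_trans (hOut_le_ratio U hUne h2U) ?_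
  rw [div_le_iff₀ (by exact_mod_cast Finset.card_pos.mpr hUne)]
  have hkey : ((outBd Adj U).card : ℝ) ≤ 2 * U.card := by
    have : (outBd Adj U).card ≤ 2 * U.card := by omega
    exact_mod_cast this
  linarith

lemma ratio_helper (a u s nn : ℝ) (hu : 0 < u) (hs : 0 < s)
    (h : a * s ≤ 2000 * (nn * u)) : a / u ≤ 2000 * (nn / s) := by
  rw [show (2000:ℝ) * (nn / s) = (2000 * nn) / s by ring]
  rw [div_le_div_iff₀ hu hs]
  linarith

lemma main_pair (hsymm : ∀ x y : V, Adj x y → Adj y x)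
    (htrans : IsVertexTransitive Adj) (hnb : ¬ Bipartite Adj)
    (L R : Finset V) (hdisj : Disjoint L R) (hne : (L ∪ R).Nonempty) :
    hOut Adj ≤ 2000 * (((II Adj L : ℝ) + (II Adj R : ℝ) +
      ((outBd Adj (L ∪ R)).card : ℝ)) / (((L ∪ R).card : ℝ))) := by
  classical
  set n := Fintype.card V with hn
  set S := L ∪ R with hS
  set Nn := II Adj L + II Adj R + (outBd Adj S).card with hNn
  have hrw : ((II Adj L : ℝ) + (II Adj R : ℝ) + ((outBd Adj S).card : ℝ))
      = (Nn : ℝ) := by rw [hNn]; push_cast; ring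
  rw [hrw]
  have hS1 : 1 ≤ S.card := Finset.card_pos.mpr hne
  have hSn : S.card ≤ n := Finset.card_le_univ _
  have hScR : (0 : ℝ) < (S.card : ℝ) := by exact_mod_cast hS1
  have hr0 : (0 : ℝ) ≤ (Nn : ℝ) / (S.card : ℝ) := by positivity
  by_cases hn1 : n ≤ 1
  · have hempty : {r : ℝ | ∃ U : Finset V, U.Nonempty ∧ 2 * U.card ≤ Fintype.card V ∧
        r = ((outBd Adj U).card : ℝ) / (U.card : ℝ)} = ∅ := by
      ext r
      simp only [Set.mem_setOf_eq, Set.mem_empty_iff_false, iff_false]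
      rintro ⟨U, hU1, hU2, -⟩
      have := Finset.card_pos.mpr hU1
      omega
    rw [hOut, hempty, Real.sInf_empty]
    positivity
  push_neg at hn1
  by_cases hbig : (1 : ℝ) / 1000 ≤ (Nn : ℝ) / (S.card : ℝ)
  · calc hOut Adj ≤ 2 := hOut_le_two hn1
      _ ≤ 2000 * ((Nn : ℝ) / (S.card : ℝ)) := by linarith
  push_neg at hbig
  have hNc : 1000 * Nn < S.card := by
    have : (1000 * Nn : ℝ) < (S.card : ℝ) := by
      rw [div_lt_div_iff₀ hScR (by norm_num)] at hbig
      linarith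
    exact_mod_cast this
  by_cases hsplit : 2 * S.card ≤ n
  · refine le_trans (hOut_le_ratio S hne hsplit) ?_
    have h1 : ((outBd Adj S).card : ℝ) ≤ (Nn : ℝ) := by
      have : (outBd Adj S).card ≤ Nn := by omega
      exact_mod_cast this
    have h2 : ((outBd Adj S).card:ℝ)/(S.card:ℝ) ≤ (Nn:ℝ)/(S.card:ℝ) := by gcongr
    linarith
  push_neg at hsplit
  -- Case |S| > n/2
  set Lg := L.filter (fun x => ∃ y ∈ L, Adj x y) with hLg
  set Rg := R.filter (fun x => ∃ y ∈ R, Adj x y) with hRg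
  have hLgc : Lg.card = II Adj L := rfl
  have hRgc : Rg.card = II Adj R := rfl
  set S' := S \ (Lg ∪ Rg) with hS'
  have hS'card : S.card ≤ S'.card + Nn := by
    have h1 := Finset.card_le_card_sdiff_add_card (s := S) (t := Lg ∪ Rg)
    rw [← hS'] at h1
    have h2 := Finset.card_union_le Lg Rg
    omega
  have hbdS' : (outBd Adj S').card ≤ Nn := by
    have hsub : outBd Adj S' ⊆ outBd Adj S ∪ (Lg ∪ Rg) := by
      intro y hy
      rw [outBd, Finset.mem_filter] at hy
      obtain ⟨-, hyn, x, hx, hadj⟩ := hy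
      rw [Finset.mem_union]
      by_cases hyS : y ∈ S
      · right
        rw [hS', Finset.mem_sdiff] at hyn
        push_neg at hyn
        exact hyn hyS
      · left
        rw [outBd, Finset.mem_filter]
        exact ⟨Finset.mem_univ _, hyS, x, Finset.mem_sdiff.mp (hS' ▸ hx) |>.1, hadj⟩
    have h1 := Finset.card_le_card hsub
    have h2 := Finset.card_union_le (outBd Adj S) (Lg ∪ Rg)
    have h3 := Finset.card_union_le Lg Rg
    omega
  set W := Finset.univ \ (S' ∪ outBd Adj S') with hW
  have hWbd : outBd Adj W ⊆ outBd Adj S' := by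
    intro y hy
    rw [outBd, Finset.mem_filter] at hy
    obtain ⟨-, hyn, x, hx, hadj⟩ := hy
    have hxW := hx
    rw [hW, Finset.mem_sdiff, Finset.mem_union] at hxW
    push_neg at hxW
    obtain ⟨-, hxS', hxbd⟩ := hxW
    have hyS' : y ∉ S' := by
      intro hyS'
      apply hxbd
      rw [outBd, Finset.mem_filter]
      exact ⟨Finset.mem_univ _, hxS', y, hyS', hsymm x y hadj⟩
    have : y ∈ S' ∪ outBd Adj S' := by
      by_contra hcon
      exact hyn (by rw [hW, Finset.mem_sdiff]; exact ⟨Finset.mem_univ _, hcon⟩)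
    rw [Finset.mem_union] at this
    exact this.resolve_left hyS'
  have hdisjbd : Disjoint S' (outBd Adj S') := by
    rw [Finset.disjoint_left]
    intro a ha hb
    rw [outBd, Finset.mem_filter] at hb
    exact hb.2.1 ha
  have hWcount : W.card + S'.card + (outBd Adj S').card = n := by
    have h1 : W.card = n - (S' ∪ outBd Adj S').card := by
      rw [hW, Finset.card_sdiff_of_subset (Finset.subset_univ _), Finset.card_univ]
    have h2 : (S' ∪ outBd Adj S').card = S'.card + (outBd Adj S').card :=
      Finset.card_union_of_disjoint hdisjbd
    have h3 : (S' ∪ outBd Adj S').card ≤ n := Finset.card_le_univ _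
    omega
  by_cases hWbig : n ≤ 100 * W.card
  · -- large leftover component-ish set
    obtain ⟨U, hUW, hUcard⟩ := Finset.exists_subset_card_eq (s := W) (n := min W.card (n / 2))
      (min_le_left _ _)
    have hUne : U.Nonempty := by
      rw [← Finset.card_pos, hUcard]
      omega
    have h2U : 2 * U.card ≤ n := by
      rw [hUcard]
      have := min_le_right W.card (n / 2)
      omega
    have hUbd : (outBd Adj U).card ≤ 2 * Nn := by
      have hsub : outBd Adj U ⊆ outBd Adj W ∪ (W \ U) := by
        intro y hy
        rw [outBd, Finset.mem_filter] at hy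
        obtain ⟨-, hyn, x, hx, hadj⟩ := hy
        rw [Finset.mem_union]
        by_cases hyW : y ∈ W
        · right; exact Finset.mem_sdiff.mpr ⟨hyW, hyn⟩
        · left
          rw [outBd, Finset.mem_filter]
          exact ⟨Finset.mem_univ _, hyW, x, hUW hx, hadj⟩
      have h1 := Finset.card_le_card hsub
      have h2 := Finset.card_union_le (outBd Adj W) (W \ U)
      have h3 := Finset.card_le_card hWbd
      have h4 : (W \ U).card = W.card - U.card := Finset.card_sdiff_of_subset hUW
      have h5 : U.card ≤ W.card := Finset.card_le_card hUW
      -- W.card - U.card ≤ Nn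
      have h6 : W.card ≤ Nn + n / 2 ∨ W.card ≤ n / 2 := by omega
      omega
    have hUlow : n ≤ 100 * U.card := by
      rw [hUcard]
      omega
    refine le_trans (hOut_le_ratio U hUne h2U) ?_
    have hUcR : (0 : ℝ) < (U.card : ℝ) := by
      have := Finset.card_pos.mpr hUne
      exact_mod_cast this
    apply ratio_helper _ _ _ _ hUcR hScR
    have hnat : (outBd Adj U).card * S.card ≤ 2000 * (Nn * U.card) := by
      calc (outBd Adj U).card * S.card ≤ (2 * Nn) * (100 * U.card) :=
        Nat.mul_le_mul hUbd (le_trans hSn hUlow)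
        _ ≤ 2000 * (Nn * U.card) := by ring_nf; omega
    exact_mod_cast hnat
  · -- the near-bipartite case
    push_neg at hWbig
    set σ : V → ℤ := fun v => if v ∈ L \ Lg then 1 else if v ∈ R \ Rg then -1 else 0
      with hσ
    have hval : ∀ v, σ v = 1 ∨ σ v = -1 ∨ σ v = 0 := by
      intro v
      simp only [hσ]
      split_ifs <;> simp
    have hmemS' : ∀ v, σ v ≠ 0 ↔ v ∈ S' := by
      intro v
      simp only [hσ, hS']
      constructor
      · intro h
        split_ifs at h with h1 h2
        · rw [Finset.mem_sdiff] at h1 ⊢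
          refine ⟨Finset.mem_union_left _ h1.1, ?_⟩
          rw [Finset.mem_union]
          rintro (hc | hc)
          · exact h1.2 hc
          · exact Finset.disjoint_left.mp hdisj h1.1 (by
              have hc' := hc
              rw [hRg, Finset.mem_filter] at hc'
              exact hc'.1)
        · rw [Finset.mem_sdiff] at h2 ⊢
          refine ⟨Finset.mem_union_right _ h2.1, ?_⟩
          rw [Finset.mem_union]
          rintro (hc | hc)
          · exact Finset.disjoint_left.mp hdisj (by
              have hc' := hc
              rw [hLg, Finset.mem_filter] at hc'
              exact hc'.1)  h2.1
          · exact h2.2 hc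
        · exact absurd rfl h
      · intro h
        rw [Finset.mem_sdiff, Finset.mem_union, Finset.mem_union] at h
        obtain ⟨hLR, hnot⟩ := h
        push_neg at hnot
        rcases hLR with hL | hR
        · rw [if_pos (Finset.mem_sdiff.mpr ⟨hL, hnot.1⟩)]; decide
        · rw [if_neg, if_pos (Finset.mem_sdiff.mpr ⟨hR, hnot.2⟩)]
          · decide
          · rw [Finset.mem_sdiff]
            rintro ⟨hc, -⟩
            exact Finset.disjoint_left.mp hdisj hc hR
    have hTset : TsetP σ = Finset.univ \ S' := by
      ext v
      rw [TsetP, Finset.mem_filter, Finset.mem_sdiff]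
      constructor
      · intro h
        refine ⟨Finset.mem_univ _, fun hc => ?_⟩
        exact ((hmemS' v).mpr hc) h.2
      · intro h
        refine ⟨Finset.mem_univ _, ?_⟩
        by_contra hc
        exact h.2 ((hmemS' v).mp hc)
    have hTcard : 1000 * (TsetP σ).card ≤ 11 * n := by
      have h1 : (TsetP σ).card = n - S'.card := by
        rw [hTset, Finset.card_sdiff_of_subset (Finset.subset_univ _), Finset.card_univ]
      omega
    have hsigL : ∀ u, u ∈ L \ Lg → σ u = 1 := by
      intro u hu
      simp only [hσ]
      rw [if_pos hu]
    have hsigR : ∀ u, u ∈ R \ Rg → σ u = -1 := by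
      intro u hu
      have hnotL : u ∉ L \ Lg := by
        rw [Finset.mem_sdiff] at hu ⊢
        rintro ⟨hc, -⟩
        exact Finset.disjoint_left.mp hdisj hc hu.1
      simp only [hσ]
      rw [if_neg hnotL, if_pos hu]
    have hcases : ∀ u, σ u ≠ 0 → u ∈ L \ Lg ∨ u ∈ R \ Rg := by
      intro u hu
      by_contra hcon
      push_neg at hcon
      apply hu
      simp only [hσ]
      rw [if_neg hcon.1, if_neg hcon.2]
    have hprop : ∀ v w, Adj v w → σ v ≠ 0 → σ w ≠ 0 → σ w = -σ v := by
      intro v w hvw hv0 hw0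
      rcases hcases v hv0 with hvm | hvm <;> rcases hcases w hw0 with hwm | hwm
      · exfalso
        rw [Finset.mem_sdiff] at hvm hwm
        apply hvm.2
        rw [hLg, Finset.mem_filter]
        exact ⟨hvm.1, w, hwm.1, hvw⟩
      · simp [hsigL v hvm, hsigR w hwm]
      · simp [hsigR v hvm, hsigL w hwm]
      · exfalso
        rw [Finset.mem_sdiff] at hvm hwm
        apply hvm.2
        rw [hRg, Finset.mem_filter]
        exact ⟨hvm.1, w, hwm.1, hvw⟩
    by_cases hdich : ∀ g ∈ Gam Adj, 100 * aF σ g ≤ n ∨ 100 * mF σ g ≤ n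
    · exact absurd (crit_bipartite hval hTcard hdich (by omega) htrans hprop) hnb
    · push_neg at hdich
      obtain ⟨g, hgG, hag, hmg⟩ := hdich
      have hbd_gen : ∀ s : ℤ, s = 1 ∨ s = -1 →
          outBd Adj (Finset.univ.filter fun u => σ (g u) = s * σ u ∧ σ u ≠ 0) ⊆
          outBd Adj S' ∪ (Finset.univ.filter fun y => g y ∈ outBd Adj S') := by
        intro s hs
        intro y hy
        rw [outBd, Finset.mem_filter] at hy
        obtain ⟨-, hyn, x, hx, hadj⟩ := hy
        rw [Finset.mem_filter] at hx
        obtain ⟨-, hx1, hx2⟩ := hx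
        have hxS' : x ∈ S' := (hmemS' x).mp hx2
        have hgx0 : σ (g x) ≠ 0 := by
          rw [hx1]
          rcases hs with h | h <;> rw [h] <;> simpa using hx2
        have hgxS' : g x ∈ S' := (hmemS' (g x)).mp hgx0
        have hadjg : Adj (g x) (g y) := (mem_Gam.mp hgG x y).mpr hadj
        rw [Finset.mem_union]
        by_cases hyS : y ∈ S'
        · by_cases hgyS : g y ∈ S'
          · exfalso
            have hy0 : σ y ≠ 0 := (hmemS' y).mpr hyS
            have hgy0 : σ (g y) ≠ 0 := (hmemS' (g y)).mpr hgyS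
            have e1 : σ y = -σ x := hprop x y hadj hx2 hy0
            have e2 : σ (g y) = -σ (g x) := hprop (g x) (g y) hadjg hgx0 hgy0
            apply hyn
            rw [Finset.mem_filter]
            refine ⟨Finset.mem_univ _, ?_, hy0⟩
            rw [e2, hx1, e1]
            ring
          · right
            rw [Finset.mem_filter]
            refine ⟨Finset.mem_univ _, ?_⟩
            rw [outBd, Finset.mem_filter]
            exact ⟨Finset.mem_univ _, hgyS, g x, hgxS', hadjg⟩
        · left
          rw [outBd, Finset.mem_filter]
          exact ⟨Finset.mem_univ _, hyS, x, hxS', hadj⟩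
      have hbd_card : ∀ s : ℤ, s = 1 ∨ s = -1 →
          (outBd Adj (Finset.univ.filter fun u => σ (g u) = s * σ u ∧ σ u ≠ 0)).card
            ≤ 2 * Nn := by
        intro s hs
        have h1 := Finset.card_le_card (hbd_gen s hs)
        have h2 := Finset.card_union_le (outBd Adj S')
          (Finset.univ.filter fun y => g y ∈ outBd Adj S')
        have h3 : (Finset.univ.filter fun y => g y ∈ outBd Adj S').card
            = (outBd Adj S').card := perm_pull_card g (outBd Adj S')
        omega
      set A := Finset.univ.filter fun u => σ (g u) = (1 : ℤ) * σ u ∧ σ u ≠ 0 with hA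
      set M := Finset.univ.filter fun u => σ (g u) = (-1 : ℤ) * σ u ∧ σ u ≠ 0 with hM
      have hAcard : n < 100 * A.card := by
        rw [hA]
        have : (Finset.univ.filter fun u => σ (g u) = (1:ℤ) * σ u ∧ σ u ≠ 0)
            = Finset.univ.filter fun u => σ (g u) = σ u ∧ σ u ≠ 0 := by
          apply Finset.filter_congr; intro u _; rw [one_mul]
        rw [this]
        exact hag
      have hMcard : n < 100 * M.card := by
        rw [hM]
        have : (Finset.univ.filter fun u => σ (g u) = (-1:ℤ) * σ u ∧ σ u ≠ 0)
            = Finset.univ.filter fun u => σ (g u) = -σ u ∧ σ u ≠ 0 := by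
          apply Finset.filter_congr; intro u _; rw [neg_one_mul]
        rw [this]
        exact hmg
      have hAM : Disjoint A M := by
        rw [Finset.disjoint_left]
        intro a ha hb
        rw [hA, Finset.mem_filter] at ha
        rw [hM, Finset.mem_filter] at hb
        obtain ⟨-, ha1, ha2⟩ := ha
        obtain ⟨-, hb1, -⟩ := hb
        rw [ha1] at hb1
        omega
      have hAMn : A.card + M.card ≤ n := by
        have := Finset.card_union_of_disjoint hAM
        have h2 : (A ∪ M).card ≤ n := Finset.card_le_univ _
        omega
      -- pick the smaller of A and M
      have hfinal : ∀ U : Finset V, (outBd Adj U).card ≤ 2 * Nn → n < 100 * U.card →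
          2 * U.card ≤ n →
          hOut Adj ≤ 2000 * ((Nn : ℝ) / (S.card : ℝ)) := by
        intro U hbd hlow h2U
        have hUne : U.Nonempty := by rw [← Finset.card_pos]; omega
        refine le_trans (hOut_le_ratio U hUne h2U) ?_
        have hUcR : (0 : ℝ) < (U.card : ℝ) := by
          have := Finset.card_pos.mpr hUne
          exact_mod_cast this
        apply ratio_helper _ _ _ _ hUcR hScR
        have hnat : (outBd Adj U).card * S.card ≤ 2000 * (Nn * U.card) := by
          calc (outBd Adj U).card * S.card ≤ (2 * Nn) * (100 * U.card) :=
            Nat.mul_le_mul hbd (by omega)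
            _ ≤ 2000 * (Nn * U.card) := by ring_nf; omega
        exact_mod_cast hnat
      by_cases hAle : A.card ≤ M.card
      · exact hfinal A (hbd_card 1 (Or.inl rfl)) hAcard (by omega)
      · exact hfinal M (hbd_card (-1) (Or.inr rfl)) hMcard (by omega)

end Outer

/-- There is an absolute constant `C > 0` such that every non-bipartite finite
vertex-transitive graph satisfies `h_out ≤ C β_out`. -/
theorem vertexTransitive_hOut_le_betaOut :
    ∃ C > (0 : ℝ),
      ∀ (V : Type) [Fintype V] (Adj : V → V → Prop),
        (∀ x y : V, Adj x y → Adj y x) →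
        IsVertexTransitive Adj →
        ¬ Bipartite Adj →
        hOut Adj ≤ C * betaOut Adj := by
  refine ⟨2000, by norm_num, ?_⟩
  intro V _ Adj hsymm htrans hnb
  have hV : Nonempty V := by
    by_contra h
    rw [not_nonempty_iff] at h
    exact hnb ⟨fun _ => true, fun x => (h.false x).elim⟩
  obtain ⟨v0⟩ := hV
  have hβne : {r : ℝ | ∃ L R : Finset V, Disjoint L R ∧ (L ∪ R).Nonempty ∧
      r = ((II Adj L : ℝ) + (II Adj R : ℝ) + ((outBd Adj (L ∪ R)).card : ℝ)) /
        ((L ∪ R).card : ℝ)}.Nonempty := by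
    refine ⟨_, {v0}, ∅, Finset.disjoint_empty_right _, by simp, rfl⟩
  have hall : ∀ b ∈ {r : ℝ | ∃ L R : Finset V, Disjoint L R ∧ (L ∪ R).Nonempty ∧
      r = ((II Adj L : ℝ) + (II Adj R : ℝ) + ((outBd Adj (L ∪ R)).card : ℝ)) /
        ((L ∪ R).card : ℝ)}, hOut Adj / 2000 ≤ b := by
    rintro b ⟨L, R, h1, h2, rfl⟩
    have := main_pair hsymm htrans hnb L R h1 h2
    rw [div_le_iff₀ (by norm_num : (0:ℝ) < 2000)]
    linarith
  have h0 : hOut Adj / 2000 ≤ betaOut Adj := le_csInf hβne hall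
  rw [div_le_iff₀ (by norm_num : (0:ℝ) < 2000)] at h0
  linarith
end

section
/- Fix k ≥ 1 and a unit vector e ∈ ℝ^k. For t ∈ [0,1], define Y_t : {v ∈ ℝ^k : ‖v‖ ≤ 1} → ℝ^k by Y_t(z) = z/‖z‖ if ‖z‖ ≥ t (with the convention z/‖z‖ = e when z = 0) and Y_t(z) = 0 if ‖z‖ < t. Then for all z₁, z₂ ∈ ℝ^k with ‖z₁‖ ≤ 1 and ‖z₂‖ ≤ 1, ∫₀¹ ‖Y_{√t}(z₁) − Y_{√t}(z₂)‖ dt ≤ (√5/2)·‖z₁ − z₂‖·(‖z₁‖ + ‖z₂‖). -/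
attribute [local instance] Classical.propDecidable

open MeasureTheory in
private lemma integral_step_aux (p q c n : ℝ) (hp : 0 ≤ p) (hpq : p ≤ q) (hq : q ≤ 1) :
    ∫ t in (0:ℝ)..1, (if t ≤ p then c else if t ≤ q then n else 0) = p * c + (q - p) * n := by
  have hGeq : ∀ t : ℝ, (if t ≤ p then c else if t ≤ q then n else 0)
      = Set.indicator (Set.Iic p) (fun _ => c) t + Set.indicator (Set.Ioc p q) (fun _ => n) t := by
    intro t
    by_cases h1 : t ≤ p
    · simp [Set.indicator_of_mem (Set.mem_Iic.mpr h1),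
        Set.indicator_of_notMem (by simp [Set.mem_Ioc]; intro h; linarith : t ∉ Set.Ioc p q), h1]
    · by_cases h2 : t ≤ q
      · simp [h1, h2, Set.indicator_of_notMem (by simpa using h1 : t ∉ Set.Iic p),
          Set.indicator_of_mem (Set.mem_Ioc.mpr ⟨lt_of_not_ge h1, h2⟩)]
      · simp [h1, h2, Set.indicator_of_notMem (by simpa using h1 : t ∉ Set.Iic p),
          Set.indicator_of_notMem (by simp [Set.mem_Ioc]; intro h; linarith : t ∉ Set.Ioc p q)]
  simp only [hGeq]
  rw [intervalIntegral.integral_of_le (by norm_num : (0:ℝ) ≤ 1)]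
  rw [MeasureTheory.integral_add]
  · rw [MeasureTheory.setIntegral_indicator measurableSet_Iic,
      MeasureTheory.setIntegral_indicator measurableSet_Ioc]
    have e1 : Set.Ioc (0:ℝ) 1 ∩ Set.Iic p = Set.Ioc 0 p := by
      rw [Set.Ioc_inter_Iic, min_eq_right (le_trans hpq hq)]
    have e2 : Set.Ioc (0:ℝ) 1 ∩ Set.Ioc p q = Set.Ioc p q := by
      rw [Set.Ioc_inter_Ioc, max_eq_right hp, min_eq_right hq]
    rw [e1, e2, MeasureTheory.setIntegral_const, MeasureTheory.setIntegral_const,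
      Real.volume_real_Ioc_of_le hp, Real.volume_real_Ioc_of_le hpq]
    simp only [smul_eq_mul]
    ring
  · exact ((integrableOn_const_iff).mpr (Or.inr (by simp))).indicator measurableSet_Iic
  · exact ((integrableOn_const_iff).mpr (Or.inr (by simp))).indicator measurableSet_Ioc

private lemma alg_key_aux (a b c d : ℝ) (hb : 0 < b) (hba : b ≤ a) (hc : 0 ≤ c) (hd : 0 ≤ d)
    (hid : d^2 = (a-b)^2 + a*b*c^2) :
    b^2*c + (a^2-b^2) ≤ Real.sqrt 5 / 2 * d * (a+b) := by
  set w := Real.sqrt (a*b) with hw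
  have hw0 : 0 ≤ w := Real.sqrt_nonneg _
  have hw2 : w^2 = a*b := Real.sq_sqrt (by nlinarith)
  have hwb : b ≤ w := by
    rw [show b = Real.sqrt (b^2) from (Real.sqrt_sq (le_of_lt hb)).symm, hw]
    exact Real.sqrt_le_sqrt (by nlinarith)
  have key : 2*(a-b) + w*c ≤ Real.sqrt 5 * d := by
    have h5 : (0:ℝ) ≤ Real.sqrt 5 := Real.sqrt_nonneg 5
    have hsq : (2*(a-b) + w*c)^2 ≤ (Real.sqrt 5 * d)^2 := by
      rw [mul_pow, Real.sq_sqrt (by norm_num : (0:ℝ) ≤ 5)]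
      nlinarith [sq_nonneg ((a-b) - 2*(w*c))]
    have h1 : 0 ≤ 2*(a-b) + w*c := by nlinarith [mul_nonneg hw0 hc]
    calc 2*(a-b)+w*c = Real.sqrt ((2*(a-b)+w*c)^2) := (Real.sqrt_sq h1).symm
      _ ≤ Real.sqrt ((Real.sqrt 5 * d)^2) := Real.sqrt_le_sqrt hsq
      _ = Real.sqrt 5 * d := Real.sqrt_sq (mul_nonneg h5 hd)
  have hbc : b^2*c ≤ ((a+b)/2)*(w*c) := by
    have h2 : b*b ≤ ((a+b)/2)*w :=
      mul_le_mul (by linarith) hwb (le_of_lt hb) (by linarith)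
    nlinarith
  have hmul : ((a+b)/2)*(2*(a-b)+w*c) ≤ ((a+b)/2)*(Real.sqrt 5 * d) :=
    mul_le_mul_of_nonneg_left key (by linarith)
  nlinarith [hbc, hmul]

private lemma norm_identity_aux {k : ℕ} (z₁ z₂ : EuclideanSpace ℝ (Fin k)) (h1 : z₁ ≠ 0)
    (h2 : z₂ ≠ 0) :
    ‖z₁ - z₂‖^2 = (‖z₁‖ - ‖z₂‖)^2 + ‖z₁‖*‖z₂‖*‖‖z₁‖⁻¹ • z₁ - ‖z₂‖⁻¹ • z₂‖^2 := by
  have ha : ‖z₁‖ ≠ 0 := norm_ne_zero_iff.mpr h1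
  have hb : ‖z₂‖ ≠ 0 := norm_ne_zero_iff.mpr h2
  rw [norm_sub_sq_real (x := z₁) (y := z₂),
    norm_sub_sq_real (x := ‖z₁‖⁻¹ • z₁) (y := ‖z₂‖⁻¹ • z₂),
    real_inner_smul_left, real_inner_smul_right, norm_smul, norm_smul,
    norm_inv, norm_norm, norm_inv, norm_norm]
  field_simp
  ring

/-- For a fixed unit vector `e ∈ ℝ^k` and `t ∈ [0,1]`, the map `Y_t` on the closed unit ball of
`ℝ^k`: `Y_t(z) = z/‖z‖` if `‖z‖ ≥ t` (with `z/‖z‖ = e` when `z = 0`) and `Y_t(z) = 0` if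
`‖z‖ < t`. -/
noncomputable def Yvec {k : ℕ} (e : EuclideanSpace ℝ (Fin k)) (t : ℝ)
    (z : EuclideanSpace ℝ (Fin k)) : EuclideanSpace ℝ (Fin k) :=
  if t ≤ ‖z‖ then (if z = 0 then e else ‖z‖⁻¹ • z) else 0

/-- Lemma of Bandeira–Singer–Spielman: for any `z₁, z₂` in the closed unit ball of `ℝ^k`,
`∫₀¹ ‖Y_{√t}(z₁) − Y_{√t}(z₂)‖ dt ≤ (√5/2) ‖z₁ − z₂‖ (‖z₁‖ + ‖z₂‖)`. -/
theorem integral_Yvec_le {k : ℕ} (hk : 1 ≤ k) (e : EuclideanSpace ℝ (Fin k)) (he : ‖e‖ = 1)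
    (z₁ z₂ : EuclideanSpace ℝ (Fin k)) (h₁ : ‖z₁‖ ≤ 1) (h₂ : ‖z₂‖ ≤ 1) :
    ∫ t in (0 : ℝ)..1, ‖Yvec e (Real.sqrt t) z₁ - Yvec e (Real.sqrt t) z₂‖ ≤
      Real.sqrt 5 / 2 * ‖z₁ - z₂‖ * (‖z₁‖ + ‖z₂‖) := by
  wlog hba : ‖z₂‖ ≤ ‖z₁‖ with H
  · have h := H hk e he z₂ z₁ h₂ h₁ (le_of_not_ge hba)
    rw [norm_sub_rev z₂ z₁, add_comm ‖z₂‖] at h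
    refine le_trans (le_of_eq (intervalIntegral.integral_congr ?_)) h
    intro t ht
    exact norm_sub_rev _ _
  have ha0 : (0:ℝ) ≤ ‖z₁‖ := norm_nonneg _
  have hb0 : (0:ℝ) ≤ ‖z₂‖ := norm_nonneg _
  have hq1 : ‖z₁‖^2 ≤ 1 := by nlinarith
  have hpq : ‖z₂‖^2 ≤ ‖z₁‖^2 := by nlinarith
  have hint : ∫ t in (0:ℝ)..1, ‖Yvec e (Real.sqrt t) z₁ - Yvec e (Real.sqrt t) z₂‖
      = ‖z₂‖^2 * ‖‖z₁‖⁻¹ • z₁ - ‖z₂‖⁻¹ • z₂‖ + (‖z₁‖^2 - ‖z₂‖^2) * ‖‖z₁‖⁻¹ • z₁‖ := by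
    rw [← integral_step_aux (‖z₂‖^2) (‖z₁‖^2) _ _ (sq_nonneg _) hpq hq1]
    rw [intervalIntegral.integral_of_le (by norm_num : (0:ℝ) ≤ 1),
        intervalIntegral.integral_of_le (by norm_num : (0:ℝ) ≤ 1)]
    apply MeasureTheory.setIntegral_congr_fun measurableSet_Ioc
    intro t ht
    have ht0 : (0:ℝ) < t := ht.1
    have hY : ∀ z : EuclideanSpace ℝ (Fin k),
        Yvec e (Real.sqrt t) z = if t ≤ ‖z‖^2 then ‖z‖⁻¹ • z else 0 := by
      intro z
      unfold Yvec
      by_cases hz : z = 0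
      · subst hz
        simp [Real.sqrt_pos.mpr ht0, not_le.mpr ht0, (Real.sqrt_pos.mpr ht0).not_ge]
      · have hs : Real.sqrt t ≤ ‖z‖ ↔ t ≤ ‖z‖^2 := by
          have h' := Real.sqrt_le_sqrt_iff (x := t) (sq_nonneg ‖z‖)
          rwa [Real.sqrt_sq (norm_nonneg z)] at h'
        simp [hz, hs]
    simp only [hY]
    by_cases h1 : t ≤ ‖z₂‖^2
    · simp [h1, le_trans h1 hpq]
    · by_cases h2 : t ≤ ‖z₁‖^2
      · simp [h1, h2]
      · simp [h1, h2]
  rw [hint]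
  by_cases hz2 : z₂ = 0
  · subst hz2
    have hu : ‖‖z₁‖⁻¹ • z₁‖ ≤ 1 := by
      rw [norm_smul, norm_inv, norm_norm]
      rcases eq_or_ne ‖z₁‖ 0 with h | h
      · simp [h]
      · rw [inv_mul_cancel₀ h]
    have h5 : (2:ℝ) ≤ Real.sqrt 5 := by
      nlinarith [Real.sq_sqrt (by norm_num : (0:ℝ) ≤ 5), Real.sqrt_nonneg 5]
    have hn : ‖‖z₁‖⁻¹ • z₁‖ ≥ 0 := norm_nonneg _
    simp only [norm_zero, sub_zero, add_zero]
    nlinarith [sq_nonneg ‖z₁‖]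
  · have hb : (0:ℝ) < ‖z₂‖ := norm_pos_iff.mpr hz2
    have hz1 : z₁ ≠ 0 := by
      intro h; rw [h, norm_zero] at hba; linarith
    have hu1 : ‖‖z₁‖⁻¹ • z₁‖ = 1 := by
      rw [norm_smul, norm_inv, norm_norm, inv_mul_cancel₀ (norm_ne_zero_iff.mpr hz1)]
    rw [hu1, mul_one]
    exact alg_key_aux ‖z₁‖ ‖z₂‖ _ _ hb hba (norm_nonneg _) (norm_nonneg _)
      (norm_identity_aux z₁ z₂ hz1 hz2)
end
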